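/- Let f : P → Q be a morphism of presentations with Q reflexive such that the underlying function f : P₁ → Q₁ is surjective and, for all words u, v ∈ P₁*, (f*(u), f*(v)) ∈ Q₂ implies (u, v) ∈ P₂. Then the induced monoid homomorphism ⟦f⟧ : ⟦P⟧ → ⟦Q⟧ is an isomorphism. -/

import Mathlib

/-- A presentation of a monoid: a type of generators and a set of relations
between words (elements of the free monoid) over the generators. -/
structure MonPres : Type 1 where
  gen : Type
  rel : Set (FreeMonoid gen × FreeMonoid gen)

namespace MonPres

/-- The congruence on the free monoid generated by the relations. -/
def con (P : MonPres) : Con (FreeMonoid P.gen) :=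
  conGen fun u v => (u, v) ∈ P.rel

/-- The monoid presented by a presentation. -/
abbrev Presented (P : MonPres) : Type := P.con.Quotient

end MonPres

/-- A morphism of presentations. -/
structure MonPresHom (P Q : MonPres) where
  toFun : P.gen → Q.gen
  map_rel : ∀ p ∈ P.rel,
    (FreeMonoid.map toFun p.1, FreeMonoid.map toFun p.2) ∈ Q.rel

namespace MonPresHom

/-- The monoid homomorphism induced on presented monoids. -/
def induced {P Q : MonPres} (f : MonPresHom P Q) : P.Presented →* Q.Presented :=
  Con.lift P.con ((Con.mk' Q.con).comp (FreeMonoid.map f.toFun)) (by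
    refine Con.conGen_le.mpr ?_
    intro x y hxy
    simp only [Con.ker_rel, MonoidHom.comp_apply, Con.coe_mk']
    exact (Con.eq _).mpr (ConGen.Rel.of _ _ (f.map_rel (x, y) hxy)))

/-- Identity morphism of presentations. -/
def id (P : MonPres) : MonPresHom P P where
  toFun := _root_.id
  map_rel := by intro p hp; simpa using hp

/-- Composition of morphisms of presentations. -/
def comp {P Q R : MonPres} (g : MonPresHom Q R) (f : MonPresHom P Q) :
    MonPresHom P R where
  toFun := g.toFun ∘ f.toFun
  map_rel := by
    intro p hp
    have h := g.map_rel _ (f.map_rel p hp)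
    simpa [FreeMonoid.map_comp] using h

end MonPresHom

/-- The standard presentation of a monoid `M`: generators are the elements of
`M`, and relations are all pairs of words whose products in `M` coincide. -/
def stdPres (M : Type) [Monoid M] : MonPres where
  gen := M
  rel := {p | FreeMonoid.lift (id : M → M) p.1 = FreeMonoid.lift (id : M → M) p.2}
/-- A presentation is reflexive when every word is related to itself. -/
def MonPres.Reflexive (P : MonPres) : Prop :=
  ∀ u : FreeMonoid P.gen, (u, u) ∈ P.rel

/-- a morphism of presentations to a reflexive presentation which
is surjective on generators and reflects relations induces an isomorphism of
presented monoids. -/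
theorem stmt8 (P Q : MonPres) (f : MonPresHom P Q) (hQ : Q.Reflexive)
    (hsurj : Function.Surjective f.toFun)
    (hrefl : ∀ u v : FreeMonoid P.gen,
      (FreeMonoid.map f.toFun u, FreeMonoid.map f.toFun v) ∈ Q.rel →
        (u, v) ∈ P.rel) :
    Function.Bijective f.induced := by
  classical
  set s : Q.gen → P.gen := Function.surjInv hsurj with hs_def
  have hsec : ∀ q, f.toFun (s q) = q := fun q => Function.surjInv_eq hsurj q
  have key : ∀ w : FreeMonoid Q.gen,
      FreeMonoid.map f.toFun (FreeMonoid.map s w) = w := by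
    intro w
    have : (FreeMonoid.map f.toFun).comp (FreeMonoid.map s) = FreeMonoid.map id := by
      rw [← FreeMonoid.map_comp]
      congr 1
      funext q
      exact hsec q
    calc FreeMonoid.map f.toFun (FreeMonoid.map s w)
        = ((FreeMonoid.map f.toFun).comp (FreeMonoid.map s)) w := rfl
      _ = FreeMonoid.map id w := by rw [this]
      _ = w := congrFun (congrArg _ FreeMonoid.map_id) w
  let g : MonPresHom Q P :=
    { toFun := s
      map_rel := fun p hp => hrefl _ _ (by rw [key, key]; exact hp) }
  have hleft : Function.LeftInverse g.induced f.induced := by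
    intro x
    induction x using Con.induction_on with
    | H u =>
      show g.induced (f.induced ((Con.mk' P.con) u)) = (Con.mk' P.con) u
      simp only [MonPresHom.induced, Con.lift_mk', MonoidHom.comp_apply]
      exact (Con.eq _).mpr (ConGen.Rel.of _ _ (hrefl _ _ (by
        rw [key]; exact hQ _)))
  have hright : Function.RightInverse g.induced f.induced := by
    intro x
    induction x using Con.induction_on with
    | H w =>
      show f.induced (g.induced ((Con.mk' Q.con) w)) = (Con.mk' Q.con) w
      simp only [MonPresHom.induced, Con.lift_mk', MonoidHom.comp_apply]
      exact congrArg (Con.mk' Q.con) (key w)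
  exact ⟨hleft.injective, hright.surjective⟩
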